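/- Let M ≥ 1, let d ∈ ℝ^M have strictly positive entries, let c ≥ 0, and let u, x ∈ ℝ^M. Then the following are equivalent: (i) for every i there exists s_i ∈ [−1,1] with s_i = 1 if x_i > 0 and s_i = −1 if x_i < 0, such that x_i − u_i/d_i + c·s_i/d_i = 0; (ii) for every i, x_i = 𝒯_c(u_i)/d_i, where 𝒯_c(t) = sign(t)·max(|t| − c, 0) is the soft-thresholding operator. -/

import Mathlib

/-- The soft-thresholding operator `𝒯_c(t) = sign(t)·max(|t| − c, 0)`. -/
noncomputable def softThresh (c t : ℝ) : ℝ := Real.sign t * max (|t| - c) 0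

lemma softThresh_pos {c t : ℝ} (hc : 0 ≤ c) (h : c < t) : softThresh c t = t - c := by
  have ht : 0 < t := lt_of_le_of_lt hc h
  rw [softThresh, Real.sign_of_pos ht, abs_of_pos ht, max_eq_left (by linarith)]
  ring

lemma softThresh_neg {c t : ℝ} (hc : 0 ≤ c) (h : t < -c) : softThresh c t = t + c := by
  have ht : t < 0 := lt_of_lt_of_le h (by linarith)
  rw [softThresh, Real.sign_of_neg ht, abs_of_neg ht, max_eq_left (by linarith)]
  ring

lemma softThresh_mid {c t : ℝ} (h : |t| ≤ c) : softThresh c t = 0 := by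
  rw [softThresh, max_eq_right (by linarith)]
  ring

lemma key (d c u x : ℝ) (hd : 0 < d) (hc : 0 ≤ c) :
    (∃ s : ℝ, s ∈ Set.Icc (-1 : ℝ) 1 ∧ (0 < x → s = 1) ∧ (x < 0 → s = -1) ∧
        x - u / d + c * s / d = 0) ↔ x = softThresh c u / d := by
  have hd0 : d ≠ 0 := ne_of_gt hd
  constructor
  · rintro ⟨s, ⟨hs1, hs2⟩, hp, hn, heq⟩
    have hxd : x * d = u - c * s := by field_simp at heq; linarith
    rcases lt_trichotomy x 0 with h | h | h
    · have hs := hn h; subst hs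
      have huc : u + c < 0 := by nlinarith
      rw [softThresh_neg hc (by linarith)]
      field_simp; linarith
    · have : |u| ≤ c := by
        rw [abs_le]
        constructor <;> nlinarith
      rw [softThresh_mid this, h, zero_div]
    · have hs := hp h; subst hs
      have huc : c < u := by nlinarith
      rw [softThresh_pos hc huc]
      field_simp; linarith
  · intro h
    rcases lt_trichotomy c u with h1 | h1 | h1
    · rw [h, softThresh_pos hc h1]
      have hx : 0 < (u - c) / d := div_pos (by linarith) hd
      refine ⟨1, ⟨by norm_num, by norm_num⟩, fun _ => rfl, fun hneg => absurd hx (by linarith), ?_⟩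
      field_simp; ring
    · rw [h, softThresh_mid (by rw [← h1, abs_of_nonneg hc]), zero_div]
      refine ⟨1, ⟨by norm_num, by norm_num⟩, by simp, by simp, ?_⟩
      rw [← h1]; ring
    · rcases lt_trichotomy u (-c) with h2 | h2 | h2
      · rw [h, softThresh_neg hc h2]
        have hx : (u + c) / d < 0 := div_neg_of_neg_of_pos (by linarith) hd
        refine ⟨-1, ⟨le_refl _, by norm_num⟩, fun hpos => absurd hx (by linarith),
          fun _ => rfl, ?_⟩
        field_simp; ring
      · rw [h, softThresh_mid (by rw [h2, abs_neg, abs_of_nonneg hc]), zero_div]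
        refine ⟨-1, ⟨le_refl _, by norm_num⟩, by simp, by simp, ?_⟩
        rw [h2]; ring
      · have habs : |u| ≤ c := abs_le.mpr ⟨le_of_lt h2, le_of_lt h1⟩
        rw [h, softThresh_mid habs, zero_div]
        have hc0 : 0 < c := by linarith
        refine ⟨u / c, ⟨?_, ?_⟩, by simp, by simp, ?_⟩
        · rw [le_div_iff₀ hc0]; linarith
        · rw [div_le_iff₀ hc0]; linarith
        · field_simp; ring

/-- Equivalence of the subgradient optimality condition
`0 ∈ x − u⊘d + c·Sign(x)⊘d` and the soft-thresholding formula `xᵢ = 𝒯_c(uᵢ)/dᵢ`. -/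
theorem optimality_iff_soft_threshold (M : ℕ) (hM : 1 ≤ M)
    (d : Fin M → ℝ) (hd : ∀ i, 0 < d i) (c : ℝ) (hc : 0 ≤ c)
    (u x : Fin M → ℝ) :
    (∀ i, ∃ s : ℝ, s ∈ Set.Icc (-1 : ℝ) 1 ∧ (0 < x i → s = 1) ∧ (x i < 0 → s = -1) ∧
        x i - u i / d i + c * s / d i = 0) ↔
    (∀ i, x i = softThresh c (u i) / d i) := by
  exact forall_congr' fun i => key (d i) c (u i) (x i) (hd i) hc
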